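/- For any finite simple graph G, Z_+(G) − 1 ≤ F_+(G) ≤ |G| − 1. -/

import Mathlib

open SimpleGraph

variable {V : Type*}

/-- One step of the standard zero forcing color-change rule: a blue vertex `u`
whose unique white neighbor is `v` forces `v` to become blue. -/
def zfStep (G : SimpleGraph V) (B : Set V) : Set V :=
  B ∪ {v | v ∉ B ∧ ∃ u ∈ B, G.Adj u v ∧ ∀ w, G.Adj u w → w ∉ B → w = v}

/-- `S` is a zero forcing set: iterating the standard color-change rule from `S`
eventually colors every vertex blue. -/
def IsZeroForcingSet (G : SimpleGraph V) (S : Set V) : Prop :=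
  (⋃ n, (zfStep G)^[n] S) = Set.univ

/-- The failed zero forcing number `F(G)`: the maximum cardinality of a set that
is not a zero forcing set. -/
noncomputable def failedZF (G : SimpleGraph V) : ℕ :=
  sSup {n | ∃ S : Set V, ¬ IsZeroForcingSet G S ∧ S.ncard = n}

/-- The zero forcing number `Z(G)`. -/
noncomputable def zfNumber (G : SimpleGraph V) : ℕ :=
  sInf {n | ∃ S : Set V, IsZeroForcingSet G S ∧ S.ncard = n}

/-- One step of the positive semidefinite color-change rule. -/
def psdStep (G : SimpleGraph V) (B : Set V) : Set V :=
  B ∪ {v | ∃ (hv : v ∉ B), ∃ u ∈ B, G.Adj u v ∧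
        ∀ (w : V) (hw : w ∉ B), G.Adj u w →
          (G.induce {x | x ∉ B}).Reachable ⟨w, hw⟩ ⟨v, hv⟩ → w = v}

/-- `S` is a positive semidefinite zero forcing set. -/
def IsPSDZeroForcingSet (G : SimpleGraph V) (S : Set V) : Prop :=
  (⋃ n, (psdStep G)^[n] S) = Set.univ

/-- The failed positive semidefinite zero forcing number `F₊(G)`. -/
noncomputable def failedPSD (G : SimpleGraph V) : ℕ :=
  sSup {n | ∃ S : Set V, ¬ IsPSDZeroForcingSet G S ∧ S.ncard = n}

/-- The positive semidefinite zero forcing number `Z₊(G)`. -/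
noncomputable def psdZFNumber (G : SimpleGraph V) : ℕ :=
  sInf {n | ∃ S : Set V, IsPSDZeroForcingSet G S ∧ S.ncard = n}

lemma psd_univ_forcing (G : SimpleGraph V) : IsPSDZeroForcingSet G Set.univ := by
  apply Set.eq_univ_of_univ_subset
  have h0 : (psdStep G)^[0] Set.univ = Set.univ := rfl
  exact h0 ▸ Set.subset_iUnion (fun n => (psdStep G)^[n] Set.univ) 0

/-- For any finite simple graph `G`, `Z₊(G) − 1 ≤ F₊(G) ≤ |G| − 1`. -/
theorem psdZFNumber_sub_one_le_failedPSD_le [Fintype V] (G : SimpleGraph V) :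
    psdZFNumber G - 1 ≤ failedPSD G ∧ failedPSD G ≤ Fintype.card V - 1 := by
  constructor
  · rcases Nat.eq_zero_or_pos (psdZFNumber G) with h | h
    · simp [h]
    · have hle : psdZFNumber G ≤ Fintype.card V := by
        apply Nat.sInf_le
        exact ⟨Set.univ, psd_univ_forcing G, by
          simp [Set.ncard_univ, Nat.card_eq_fintype_card]⟩
      have hn : psdZFNumber G - 1 ≤ (Set.univ : Set V).ncard := by
        simp only [Set.ncard_univ, Nat.card_eq_fintype_card]; omega
      obtain ⟨S, hSsub, hScard⟩ := Set.exists_subset_card_eq hn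
      have hnf : ¬ IsPSDZeroForcingSet G S := by
        intro hf
        have h2 : psdZFNumber G ≤ S.ncard := Nat.sInf_le ⟨S, hf, rfl⟩
        omega
      have hmem : psdZFNumber G - 1 ∈
          {n | ∃ S : Set V, ¬ IsPSDZeroForcingSet G S ∧ S.ncard = n} := ⟨S, hnf, hScard⟩
      refine le_csSup ⟨Fintype.card V, ?_⟩ hmem
      rintro n ⟨T, _, rfl⟩
      calc T.ncard ≤ (Set.univ : Set V).ncard :=
            Set.ncard_le_ncard (Set.subset_univ T) Set.finite_univ
        _ = Fintype.card V := by simp [Set.ncard_univ, Nat.card_eq_fintype_card]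
  · rcases Set.eq_empty_or_nonempty
        {n | ∃ S : Set V, ¬ IsPSDZeroForcingSet G S ∧ S.ncard = n} with h | h
    · simp [failedPSD, h]
    · apply csSup_le h
      rintro n ⟨S, hnf, rfl⟩
      have hne : S ≠ Set.univ := fun e => hnf (e ▸ psd_univ_forcing G)
      have hlt : S.ncard < Fintype.card V := by
        have := Set.ncard_lt_ncard (Set.ssubset_univ_iff.mpr hne) Set.finite_univ
        simpa [Set.ncard_univ, Nat.card_eq_fintype_card] using this
      omega
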